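/- Invariance of refinement above any bisimulation: let P' be an NN-bisimulation of N and P a layered partition coarser than P'. If S' ∈ P_i and S ∈ P_{i-1}, then replacing S' by SplitPre(S', S) yields a partition still coarser than P'; i.e., no class of P' contained in S' is split by SplitPre(S', S). -/
import Mathlib


/-- One-step (layer) semantics of a neural network layer. -/
def layerSem {α β : Type*} [Fintype α] (W : α → β → ℝ) (b : β → ℝ) (A : β → ℝ → ℝ)
    (v : α → ℝ) : β → ℝ :=
  fun s' => A s' ((∑ s, W s s' * v s) + b s')

open Classical in
/-- Pre-sum of a set of previous-layer nodes into a node `s'`. -/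
noncomputable def preSum {α β : Type*} [Fintype α] (W : α → β → ℝ) (c : Set α) (s' : β) : ℝ :=
  ∑ s ∈ Finset.univ.filter (fun s => s ∈ c), W s s'

/-- A valuation is `P`-consistent if it is constant on classes. -/
def consistent {α : Type*} (P : Setoid α) (v : α → ℝ) : Prop :=
  ∀ s₁ s₂, P.r s₁ s₂ → v s₁ = v s₂

/-- One layer of the NN-bisimulation condition. -/
def isBisimStep {α β : Type*} [Fintype α] (W : α → β → ℝ) (b : β → ℝ) (A : β → ℝ → ℝ)
    (Pp : Setoid α) (Pn : Setoid β) : Prop :=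
  ∀ s₁ s₂ : β, Pn.r s₁ s₂ →
    A s₁ = A s₂ ∧ b s₁ = b s₂ ∧
    ∀ t : α, preSum W {x | Pp.r x t} s₁ = preSum W {x | Pp.r x t} s₂

/-- One layer of the δ-NN-bisimulation condition. -/
def isDeltaBisimStep {α β : Type*} [Fintype α] (W : α → β → ℝ) (b : β → ℝ) (A : β → ℝ → ℝ)
    (Pp : Setoid α) (Pn : Setoid β) (δ : ℝ) : Prop :=
  ∀ s₁ s₂ : β, Pn.r s₁ s₂ →
    A s₁ = A s₂ ∧ |b s₁ - b s₂| ≤ δ ∧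
    ∀ t : α, |preSum W {x | Pp.r x t} s₁ - preSum W {x | Pp.r x t} s₂| ≤ δ

/-- Semantics of the composition of the first `i` layers of a network. -/
def netSem (S : ℕ → Type) [∀ i, Fintype (S i)] (W : ∀ i, S i → S (i+1) → ℝ)
    (b : ∀ i, S (i+1) → ℝ) (A : ∀ i, S (i+1) → ℝ → ℝ) : (i : ℕ) → (S 0 → ℝ) → S i → ℝ
  | 0, v => v
  | (i+1), v => layerSem (W i) (b i) (A i) (netSem S W b A i v)

/-- Quotient weights: pre-sum of a class into a representative. -/
noncomputable def qW {α β : Type*} [Fintype α] (Pp : Setoid α) (Pn : Setoid β)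
    (W : α → β → ℝ) (c : Quotient Pp) (d : Quotient Pn) : ℝ :=
  preSum W {x | Quotient.mk Pp x = c} d.out

/-- Quotient bias via representative. -/
noncomputable def qb {β : Type*} (Pn : Setoid β) (b : β → ℝ) (d : Quotient Pn) : ℝ := b d.out

/-- Quotient activation via representative. -/
noncomputable def qA {β : Type*} (Pn : Setoid β) (A : β → ℝ → ℝ) (d : Quotient Pn) : ℝ → ℝ :=
  A d.out

/-- Abstraction of a `P`-consistent valuation. -/
noncomputable def absVal {α : Type*} (P : Setoid α) (v : α → ℝ) (c : Quotient P) : ℝ := v c.out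

/-- `vh` is an ε-abstraction of `v`. -/
def isEpsAbs {α : Type*} (P : Setoid α) (ε : ℝ) (v : α → ℝ) (vh : Quotient P → ℝ) : Prop :=
  ∀ s : α, |vh (Quotient.mk P s) - v s| ≤ ε

/-- `v` is (ε,P)-consistent. -/
def epsConsistent {α : Type*} (P : Setoid α) (ε : ℝ) (v : α → ℝ) : Prop :=
  ∀ s₁ s₂, P.r s₁ s₂ → |v s₁ - v s₂| ≤ ε


/-- splitting by pre-sums w.r.t. a union `S` of classes of a bisimulation
`P'` never separates two `P'`-related nodes: their pre-sums into `S` agree. -/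
theorem splitPre_respects_bisim {α β : Type*} [Fintype α]
    (W : α → β → ℝ) (b : β → ℝ) (A : β → ℝ → ℝ)
    (Pp' : Setoid α) (Pn' : Setoid β)
    (hbis : isBisimStep W b A Pp' Pn')
    (S : Set α) (hS : ∀ x y, Pp'.r x y → (x ∈ S ↔ y ∈ S))
    (s₁ s₂ : β) (h : Pn'.r s₁ s₂) :
    preSum W S s₁ = preSum W S s₂ := by
  classical
  have key : ∀ s : β, preSum W S s =
      ∑ c : Quotient Pp', ∑ a ∈ Finset.univ.filter
        (fun a => a ∈ S ∧ Quotient.mk Pp' a = c), W a s := by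
    intro s
    rw [preSum]
    rw [← Finset.sum_fiberwise_of_maps_to (g := Quotient.mk Pp')
      (fun a _ => Finset.mem_univ _)]
    apply Finset.sum_congr rfl
    intro c _
    apply Finset.sum_congr _ (fun _ _ => rfl)
    ext a
    simp [and_comm]
  rw [key s₁, key s₂]
  apply Finset.sum_congr rfl
  intro c _
  by_cases hc : c.out ∈ S
  · have hset : Finset.univ.filter (fun a => a ∈ S ∧ Quotient.mk Pp' a = c) =
        Finset.univ.filter (fun a => a ∈ {x | Pp'.r x c.out}) := by
      ext a
      simp only [Finset.mem_filter, Finset.mem_univ, true_and, Set.mem_setOf_eq]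
      constructor
      · rintro ⟨_, hac⟩
        have : Quotient.mk Pp' a = Quotient.mk Pp' c.out := by
          rw [hac, Quotient.out_eq]
        exact Quotient.exact this
      · intro hr
        have hmk : Quotient.mk Pp' a = c := by
          rw [← Quotient.out_eq c]; exact Quotient.sound hr
        exact ⟨(hS a c.out hr).mpr hc, hmk⟩
    rw [hset]
    exact (hbis s₁ s₂ h).2.2 c.out
  · have hset : Finset.univ.filter (fun a => a ∈ S ∧ Quotient.mk Pp' a = c) = ∅ := by
      ext a
      simp only [Finset.mem_filter, Finset.mem_univ, true_and, Finset.notMem_empty,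
        iff_false, not_and]
      intro haS hac
      apply hc
      have : Quotient.mk Pp' a = Quotient.mk Pp' c.out := by
        rw [hac, Quotient.out_eq]
      exact (hS a c.out (Quotient.exact this)).mp haS
    rw [hset]
    simp
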